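/- Let v : [0, ∞) → ℝ be continuous on [0, ∞), twice continuously differentiable on (0, ∞), and square-integrable on (0, ∞). Then v satisfies v″(ξ) + (ξ/2) v′(ξ) + v(ξ) = 0 for all ξ > 0 together with v(0) = 0 if and only if there exists β ∈ ℝ such that v(ξ) = β ξ e^{−ξ²/4} for all ξ ≥ 0. -/

import Mathlib

open Set MeasureTheory

lemma aux_exp (x : ℝ) :
    HasDerivAt (fun t : ℝ => Real.exp (t ^ 2 / 4)) (x / 2 * Real.exp (x ^ 2 / 4)) x := by
  have h := (((hasDerivAt_pow 2 x).div_const 4).exp)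
  convert h using 1
  simp
  ring

lemma aux_expneg (x : ℝ) :
    HasDerivAt (fun t : ℝ => Real.exp (-t ^ 2 / 4)) (-(x / 2) * Real.exp (-x ^ 2 / 4)) x := by
  have h := ((((hasDerivAt_pow 2 x).neg).div_const 4).exp)
  refine h.congr_deriv ?_
  simp
  ring

lemma aux_g (β x : ℝ) :
    HasDerivAt (fun t : ℝ => β * t * Real.exp (-t ^ 2 / 4))
      (β * (1 - x ^ 2 / 2) * Real.exp (-x ^ 2 / 4)) x := by
  have h := (((hasDerivAt_id x).const_mul β).mul (aux_expneg x))
  refine h.congr_deriv ?_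
  simp only [id]
  ring

lemma aux_g1 (β x : ℝ) :
    HasDerivAt (fun t : ℝ => β * (1 - t ^ 2 / 2) * Real.exp (-t ^ 2 / 4))
      (β * (x ^ 3 / 4 - 3 * x / 2) * Real.exp (-x ^ 2 / 4)) x := by
  have h1 : HasDerivAt (fun t : ℝ => β * (1 - t ^ 2 / 2)) (β * (-x)) x := by
    have := (((hasDerivAt_pow 2 x).div_const 2).const_sub 1).const_mul β
    refine this.congr_deriv ?_
    simp
  have h := h1.mul (aux_expneg x)
  refine h.congr_deriv ?_
  ring

lemma aux_const {f : ℝ → ℝ} (hf : ∀ x ∈ Ioi (0:ℝ), HasDerivAt f 0 x) :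
    ∀ x ∈ Ioi (0:ℝ), f x = f 1 := by
  intro x hx
  refine (convex_Ioi (0:ℝ)).is_const_of_fderivWithin_eq_zero
    (fun y hy => ((hf y hy).differentiableAt).differentiableWithinAt) (fun y hy => ?_) hx
    (by norm_num)
  rw [fderivWithin_of_isOpen isOpen_Ioi hy, (hf y hy).hasFDerivAt.fderiv]
  ext
  simp

/-- Characterization of `L²` solutions on the half line with Dirichlet boundary condition
of `L_Δ Ψ₀ = 0`, where `L_Δ = ∂²_ξ + (ξ/2)∂_ξ + 1`: they are exactly the multiples of the
Gaussian tail profile `ξ e^{-ξ²/4}` (equation (2.19)). -/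
theorem stmt_10 (v : ℝ → ℝ)
    (hcont : ContinuousOn v (Ici (0:ℝ)))
    (hC2 : ContDiffOn ℝ 2 v (Ioi (0:ℝ)))
    (hL2 : IntegrableOn (fun ξ => v ξ ^ 2) (Ioi (0:ℝ))) :
    ((∀ ξ > (0:ℝ), deriv (deriv v) ξ + (ξ / 2) * deriv v ξ + v ξ = 0) ∧ v 0 = 0)
      ↔ ∃ β : ℝ, ∀ ξ ≥ (0:ℝ), v ξ = β * ξ * Real.exp (-ξ ^ 2 / 4) := by
  constructor
  · rintro ⟨hODE, h0⟩
    have hdv : ∀ x ∈ Ioi (0:ℝ), HasDerivAt v (deriv v x) x := by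
      intro x hx
      exact ((hC2.differentiableOn (by norm_num)).differentiableAt
        (isOpen_Ioi.mem_nhds hx)).hasDerivAt
    have hdv2 : ∀ x ∈ Ioi (0:ℝ), HasDerivAt (deriv v) (deriv (deriv v) x) x := by
      intro x hx
      have h1 : ContDiffOn ℝ 1 (deriv v) (Ioi (0:ℝ)) :=
        hC2.deriv_of_isOpen isOpen_Ioi (by norm_num)
      exact ((h1.differentiableOn (by norm_num)).differentiableAt
        (isOpen_Ioi.mem_nhds hx)).hasDerivAt
    -- the quantity p is constant
    have hdp : ∀ x ∈ Ioi (0:ℝ),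
        HasDerivAt (fun t => t * deriv v t + (t ^ 2 / 2 - 1) * v t) 0 x := by
      intro x hx
      have h1 := (hasDerivAt_id' (x := x)).mul (hdv2 x hx)
      have h2 : HasDerivAt (fun t : ℝ => t ^ 2 / 2 - 1) x x := by
        have := ((hasDerivAt_pow 2 x).div_const 2).sub_const 1
        refine this.congr_deriv ?_
        simp
      have h := h1.add (h2.mul (hdv x hx))
      refine h.congr_deriv ?_
      linear_combination x * hODE x hx
    set C : ℝ := 1 * deriv v 1 + (1 ^ 2 / 2 - 1) * v 1 with hCdef
    have hpc : ∀ x ∈ Ioi (0:ℝ), x * deriv v x + (x ^ 2 / 2 - 1) * v x = C :=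
      fun x hx => aux_const hdp x hx
    -- derivative of q(t) = v t * exp(t²/4) / t
    have hq : ∀ x ∈ Ioi (0:ℝ),
        HasDerivAt (fun t => v t * Real.exp (t ^ 2 / 4) / t)
          (C * Real.exp (x ^ 2 / 4) / x ^ 2) x := by
      intro x hx
      have hx0 : x ≠ 0 := ne_of_gt hx
      have hu := (hdv x hx).mul (aux_exp x)
      have h := hu.div (hasDerivAt_id' (x := x)) hx0
      refine h.congr_deriv ?_
      have hp1 := hpc x hx
      simp only [Pi.mul_apply]
      rw [div_eq_div_iff (by positivity) (by positivity)]
      linear_combination (Real.exp (x ^ 2 / 4) * x ^ 2) * hp1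
    -- limit of v t * exp(t²/4) as t → 0⁺ is 0
    have hlim : Filter.Tendsto (fun t => v t * Real.exp (t ^ 2 / 4))
        (nhdsWithin 0 (Ioi (0:ℝ))) (nhds 0) := by
      have hc : ContinuousWithinAt (fun t => v t * Real.exp (t ^ 2 / 4)) (Ici (0:ℝ)) 0 :=
        (hcont.continuousWithinAt (by simp)).mul
          ((Real.continuous_exp.comp (by continuity)).continuousWithinAt)
      have := hc.tendsto
      simp only [h0, zero_mul] at this
      exact this.mono_left (nhdsWithin_mono 0 Ioi_subset_Ici_self)
    have hmem : Ioo (0:ℝ) 1 ∈ nhdsWithin 0 (Ioi (0:ℝ)) :=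
      Ioo_mem_nhdsGT_of_mem (by constructor <;> norm_num)
    -- C = 0
    have hC0 : C = 0 := by
      set r : ℝ → ℝ := fun t => v t * Real.exp (t ^ 2 / 4) / t + C / t with hrdef
      have hr : ∀ x ∈ Ioi (0:ℝ),
          HasDerivAt r (C * (Real.exp (x ^ 2 / 4) - 1) / x ^ 2) x := by
        intro x hx
        have hx0 : x ≠ 0 := ne_of_gt hx
        have h2 : HasDerivAt (fun t : ℝ => C / t) (C * -(x ^ 2)⁻¹) x := by
          simpa [div_eq_mul_inv] using (hasDerivAt_inv hx0).const_mul C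
        have h := (hq x hx).add h2
        refine h.congr_deriv ?_
        field_simp
        ring
      have hrcont : ContinuousOn r (Ioi (0:ℝ)) :=
        fun x hx => ((hr x hx).differentiableAt).continuousAt.continuousWithinAt
      have hrdiff : DifferentiableOn ℝ r (interior (Ioi (0:ℝ))) := by
        rw [interior_Ioi]
        exact fun x hx => ((hr x hx).differentiableAt).differentiableWithinAt
      have hexp1 : ∀ x : ℝ, (1:ℝ) ≤ Real.exp (x ^ 2 / 4) := fun x =>
        Real.one_le_exp (by positivity)
      rcases lt_trichotomy C 0 with hC | hC | hC
      · -- C < 0 : r is antitone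
        have hanti : AntitoneOn r (Ioi (0:ℝ)) := by
          refine antitoneOn_of_deriv_nonpos (convex_Ioi 0) hrcont hrdiff fun x hx => ?_
          rw [interior_Ioi] at hx
          have hx' : (0:ℝ) < x := hx
          rw [(hr x hx).deriv]
          apply div_nonpos_of_nonpos_of_nonneg _ (by positivity)
          exact mul_nonpos_iff.mpr (Or.inr ⟨hC.le, by linarith [hexp1 x]⟩)
        have hineq : ∀ a ∈ Ioo (0:ℝ) 1, r 1 * a - C ≤ v a * Real.exp (a ^ 2 / 4) := by
          intro a ha
          have ha0 : (0:ℝ) < a := ha.1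
          have h1 : r 1 ≤ v a * Real.exp (a ^ 2 / 4) / a + C / a :=
            hanti (mem_Ioi.mpr ha.1) (mem_Ioi.mpr one_pos) (le_of_lt ha.2)
          rw [← add_div, le_div_iff₀ ha0] at h1
          linarith
        have htR : Filter.Tendsto (fun a : ℝ => r 1 * a - C)
            (nhdsWithin 0 (Ioi (0:ℝ))) (nhds (-C)) := by
          have h : Filter.Tendsto (fun a : ℝ => r 1 * a - C) (nhds 0) (nhds (r 1 * 0 - C)) := by
            exact ((continuous_const.mul continuous_id).sub continuous_const).tendsto 0
          simpa using h.mono_left nhdsWithin_le_nhds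
        have hfin : -C ≤ 0 :=
          le_of_tendsto_of_tendsto htR hlim (Filter.eventually_of_mem hmem hineq)
        linarith
      · exact hC
      · -- C > 0 : r is monotone
        have hmono : MonotoneOn r (Ioi (0:ℝ)) := by
          refine monotoneOn_of_deriv_nonneg (convex_Ioi 0) hrcont hrdiff fun x hx => ?_
          rw [interior_Ioi] at hx
          have hx' : (0:ℝ) < x := hx
          rw [(hr x hx).deriv]
          apply div_nonneg _ (by positivity)
          exact mul_nonneg hC.le (by linarith [hexp1 x])
        have hineq : ∀ a ∈ Ioo (0:ℝ) 1, v a * Real.exp (a ^ 2 / 4) ≤ r 1 * a - C := by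
          intro a ha
          have ha0 : (0:ℝ) < a := ha.1
          have h1 : v a * Real.exp (a ^ 2 / 4) / a + C / a ≤ r 1 :=
            hmono (mem_Ioi.mpr ha.1) (mem_Ioi.mpr one_pos) (le_of_lt ha.2)
          rw [← add_div, div_le_iff₀ ha0] at h1
          linarith
        have htR : Filter.Tendsto (fun a : ℝ => r 1 * a - C)
            (nhdsWithin 0 (Ioi (0:ℝ))) (nhds (-C)) := by
          have h : Filter.Tendsto (fun a : ℝ => r 1 * a - C) (nhds 0) (nhds (r 1 * 0 - C)) := by
            exact ((continuous_const.mul continuous_id).sub continuous_const).tendsto 0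
          simpa using h.mono_left nhdsWithin_le_nhds
        have hfin : (0:ℝ) ≤ -C :=
          le_of_tendsto_of_tendsto hlim htR (Filter.eventually_of_mem hmem hineq)
        linarith
    -- conclude
    have hq0 : ∀ x ∈ Ioi (0:ℝ), HasDerivAt (fun t => v t * Real.exp (t ^ 2 / 4) / t) 0 x := by
      intro x hx
      simpa [hC0] using hq x hx
    refine ⟨v 1 * Real.exp (1 ^ 2 / 4) / 1, fun ξ hξ => ?_⟩
    rcases eq_or_lt_of_le hξ with h | h
    · simp [← h, h0]
    · have hβ : v ξ * Real.exp (ξ ^ 2 / 4) / ξ = v 1 * Real.exp (1 ^ 2 / 4) / 1 :=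
        aux_const hq0 ξ h
      have hx0 : ξ ≠ 0 := ne_of_gt h
      have hexp : Real.exp (-ξ ^ 2 / 4) = (Real.exp (ξ ^ 2 / 4))⁻¹ := by
        rw [← Real.exp_neg]
        ring_nf
      rw [hexp]
      rw [div_eq_div_iff hx0 one_ne_zero] at hβ
      have he := Real.exp_ne_zero (ξ ^ 2 / 4)
      field_simp at hβ ⊢
      linear_combination hβ
  · rintro ⟨β, hβ⟩
    constructor
    · intro ξ hξ
      have hd1 : ∀ y ∈ Ioi (0:ℝ), deriv v y = β * (1 - y ^ 2 / 2) * Real.exp (-y ^ 2 / 4) := by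
        intro y hy
        have hev : v =ᶠ[nhds y] (fun t : ℝ => β * t * Real.exp (-t ^ 2 / 4)) := by
          filter_upwards [isOpen_Ioi.mem_nhds hy] with z hz using hβ z (le_of_lt hz)
        rw [hev.deriv_eq, (aux_g β y).deriv]
      have hev2 : deriv v =ᶠ[nhds ξ] (fun t : ℝ => β * (1 - t ^ 2 / 2) * Real.exp (-t ^ 2 / 4)) := by
        filter_upwards [isOpen_Ioi.mem_nhds hξ] with z hz using hd1 z hz
      have hd2 : deriv (deriv v) ξ = β * (ξ ^ 3 / 4 - 3 * ξ / 2) * Real.exp (-ξ ^ 2 / 4) := by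
        rw [hev2.deriv_eq, (aux_g1 β ξ).deriv]
      rw [hd2, hd1 ξ hξ, hβ ξ (le_of_lt hξ)]
      ring
    · simpa using hβ 0 le_rfl
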